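/- The function f(z) = (-ln(1-z))·(1-z)/z is strictly concave on the interval (0,1); equivalently, its second derivative f''(z) = (-2z + z² - 2·ln(1-z)·(1-z))/((1-z)·z³) is negative for all z ∈ (0,1). -/

import Mathlib

open Set Real

private lemma hderiv1 {x : ℝ} (hx : x ∈ Set.Ioo (0:ℝ) 1) :
    HasDerivAt (fun z : ℝ => (-Real.log (1 - z)) * (1 - z) / z)
      ((x + Real.log (1 - x)) / x ^ 2) x := by
  obtain ⟨hx0, hx1⟩ := hx
  have h1x : (1:ℝ) - x > 0 := by linarith
  have hL : HasDerivAt (fun z : ℝ => Real.log (1 - z)) (-(1 - x)⁻¹) x := by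
    have h := (Real.hasDerivAt_log (ne_of_gt h1x)).comp x
      ((hasDerivAt_const x (1:ℝ)).sub (hasDerivAt_id x))
    refine h.congr_deriv ?_; ring
  have hn : HasDerivAt (fun z : ℝ => (-Real.log (1 - z)) * (1 - z))
      (1 + Real.log (1 - x)) x := by
    have h := (hL.neg).mul ((hasDerivAt_const x (1:ℝ)).sub (hasDerivAt_id x))
    refine h.congr_deriv ?_
    simp only [Pi.sub_apply, Pi.neg_apply, id_eq]
    field_simp
    ring
  have h := hn.div (hasDerivAt_id x) (ne_of_gt hx0)
  refine h.congr_deriv ?_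
  simp only [Pi.sub_apply, Pi.neg_apply, id_eq]
  field_simp
  ring

private lemma hderiv2 {x : ℝ} (hx : x ∈ Set.Ioo (0:ℝ) 1) :
    HasDerivAt (fun z : ℝ => (z + Real.log (1 - z)) / z ^ 2)
      ((-2 * x + x ^ 2 - 2 * Real.log (1 - x) * (1 - x)) / ((1 - x) * x ^ 3)) x := by
  obtain ⟨hx0, hx1⟩ := hx
  have h1x : (1:ℝ) - x > 0 := by linarith
  have hL : HasDerivAt (fun z : ℝ => Real.log (1 - z)) (-(1 - x)⁻¹) x := by
    have h := (Real.hasDerivAt_log (ne_of_gt h1x)).comp x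
      ((hasDerivAt_const x (1:ℝ)).sub (hasDerivAt_id x))
    refine h.congr_deriv ?_; ring
  have hn : HasDerivAt (fun z : ℝ => z + Real.log (1 - z)) (1 - (1 - x)⁻¹) x := by
    have h := (hasDerivAt_id x).add hL
    refine h.congr_deriv ?_; ring
  have hd : HasDerivAt (fun z : ℝ => z ^ 2) (2 * x) x := by
    have h := hasDerivAt_pow 2 x
    refine h.congr_deriv ?_; ring
  have h := hn.div hd (by positivity)
  refine h.congr_deriv ?_
  rw [div_eq_div_iff (by positivity) (by positivity)]
  field_simp
  ring

private lemma num_neg {x : ℝ} (hx : x ∈ Set.Ioo (0:ℝ) 1) :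
    -2 * x + x ^ 2 - 2 * Real.log (1 - x) * (1 - x) < 0 := by
  obtain ⟨hx0, hx1⟩ := hx
  have hgd : ∀ y ∈ Set.Ioo (0:ℝ) 1,
      HasDerivAt (fun z : ℝ => -2 * z + z ^ 2 - 2 * Real.log (1 - z) * (1 - z))
        (2 * y + 2 * Real.log (1 - y)) y := by
    intro y hy
    obtain ⟨hy0, hy1⟩ := hy
    have h1y : (1:ℝ) - y > 0 := by linarith
    have hL : HasDerivAt (fun z : ℝ => Real.log (1 - z)) (-(1 - y)⁻¹) y := by
      have h := (Real.hasDerivAt_log (ne_of_gt h1y)).comp y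
        ((hasDerivAt_const y (1:ℝ)).sub (hasDerivAt_id y))
      refine h.congr_deriv ?_; ring
    have hP : HasDerivAt (fun z : ℝ => 2 * Real.log (1 - z) * (1 - z))
        (2 * (-1 - Real.log (1 - y))) y := by
      have h := (hL.const_mul (2:ℝ)).mul ((hasDerivAt_const y (1:ℝ)).sub (hasDerivAt_id y))
      refine h.congr_deriv ?_
      simp only [Pi.sub_apply, Pi.neg_apply, id_eq]
      field_simp
      ring
    have hsq : HasDerivAt (fun z : ℝ => z ^ 2) (2 * y) y := by
      have h := hasDerivAt_pow 2 y
      refine h.congr_deriv ?_; ring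
    have h2 : HasDerivAt (fun z : ℝ => -2 * z) (-2 : ℝ) y := by
      have h := (hasDerivAt_id y).const_mul (-2:ℝ)
      refine h.congr_deriv ?_; ring
    have h := (h2.add hsq).sub hP
    refine h.congr_deriv ?_
    ring
  have hcont : ContinuousOn (fun z : ℝ => -2 * z + z ^ 2 - 2 * Real.log (1 - z) * (1 - z))
      (Set.Ico (0:ℝ) 1) := by
    apply ContinuousOn.sub
    · exact (continuousOn_const.mul continuousOn_id).add (continuousOn_pow 2)
    · apply ContinuousOn.mul
      apply ContinuousOn.mul continuousOn_const
      · apply Real.continuousOn_log.comp (by fun_prop)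
        intro y hy
        obtain ⟨hy0, hy1⟩ := hy
        simp only [Set.mem_compl_iff, Set.mem_singleton_iff]
        intro h; linarith
      · fun_prop
  have hanti : StrictAntiOn (fun z : ℝ => -2 * z + z ^ 2 - 2 * Real.log (1 - z) * (1 - z))
      (Set.Ico (0:ℝ) 1) := by
    apply strictAntiOn_of_deriv_neg (convex_Ico 0 1) hcont
    intro y hy
    rw [interior_Ico] at hy
    rw [(hgd y hy).deriv]
    obtain ⟨hy0, hy1⟩ := hy
    have : Real.log (1 - y) < (1 - y) - 1 :=
      Real.log_lt_sub_one_of_pos (by linarith) (ne_of_lt (by linarith))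
    linarith
  have h := hanti (Set.mem_Ico.mpr ⟨le_refl 0, one_pos⟩)
    (Set.mem_Ico.mpr ⟨le_of_lt hx0, hx1⟩) hx0
  simpa using h

theorem stmt_4 :
    StrictConcaveOn ℝ (Set.Ioo (0:ℝ) 1) (fun z : ℝ => (-Real.log (1 - z)) * (1 - z) / z) ∧
    ∀ z ∈ Set.Ioo (0:ℝ) 1,
      (-2 * z + z ^ 2 - 2 * Real.log (1 - z) * (1 - z)) / ((1 - z) * z ^ 3) < 0 := by
  have hneg : ∀ z ∈ Set.Ioo (0:ℝ) 1,
      (-2 * z + z ^ 2 - 2 * Real.log (1 - z) * (1 - z)) / ((1 - z) * z ^ 3) < 0 := by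
    intro z hz
    obtain ⟨hz0, hz1⟩ := hz
    apply div_neg_of_neg_of_pos (num_neg ⟨hz0, hz1⟩)
    exact mul_pos (by linarith) (by positivity)
  refine ⟨?_, hneg⟩
  apply strictConcaveOn_of_deriv2_neg (convex_Ioo 0 1)
  · intro x hx
    exact (hderiv1 hx).continuousAt.continuousWithinAt
  · intro x hx
    rw [interior_Ioo] at hx
    have heq : deriv (fun z : ℝ => (-Real.log (1 - z)) * (1 - z) / z) =ᶠ[nhds x]
        (fun z : ℝ => (z + Real.log (1 - z)) / z ^ 2) := by
      filter_upwards [isOpen_Ioo.mem_nhds hx] with y hy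
      exact (hderiv1 hy).deriv
    simp only [Function.iterate_succ, Function.iterate_zero, Function.comp_apply, id_eq]
    rw [heq.deriv_eq, (hderiv2 hx).deriv]
    exact hneg x hx
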